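/- Lemma 3.3, first part (one-dimensional marginals of the invariant law): Let σ̄ be a Q̄-invariant Borel probability measure on S × 𝒮. Then for every t ∈ S and every j ≥ 0, σ̄({(s, 𝐬) ∈ S × 𝒮 : s = t}) = σ̄({(s, 𝐬) ∈ S × 𝒮 : s_j = t}) = ρ(t)·h(t). -/

import Mathlib

open MeasureTheory ProbabilityTheory

/-- Concatenation of a type `t` with a memory sequence `x`. -/
def memCons {S : Type*} (t : S) (x : ℕ → S) : ℕ → S
  | 0 => t
  | n + 1 => x n

private lemma abs_add_lt_of_signs {x y : ℝ} (hx : 0 < x) (hy : y < 0) :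
    |x + y| < |x| + |y| := by
  rcases abs_cases (x + y) with ⟨e, _⟩ | ⟨e, _⟩ <;>
    rw [e, abs_of_pos hx, abs_of_neg hy] <;> linarith

private lemma abs_sum_lt {S : Type*} [Fintype S] {v : S → ℝ} {a b : S}
    (ha : 0 < v a) (hb : v b < 0) :
    |∑ s : S, v s| < ∑ s : S, |v s| := by
  have hab : a ≠ b := by rintro rfl; linarith
  classical
  have h1 : ∑ s : S, v s = (v a + v b) + ∑ s ∈ (Finset.univ \ {a, b}), v s := by
    rw [← Finset.sum_sdiff (Finset.subset_univ {a, b})]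
    rw [Finset.sum_pair hab]; ring
  have h2 : ∑ s : S, |v s| = (|v a| + |v b|) + ∑ s ∈ (Finset.univ \ {a, b}), |v s| := by
    rw [← Finset.sum_sdiff (Finset.subset_univ {a, b}) (f := fun s => |v s|)]
    rw [Finset.sum_pair hab]; ring
  rw [h1, h2]
  calc |(v a + v b) + ∑ s ∈ (Finset.univ \ {a, b}), v s|
      ≤ |v a + v b| + |∑ s ∈ (Finset.univ \ {a, b}), v s| := abs_add_le _ _
    _ ≤ |v a + v b| + ∑ s ∈ (Finset.univ \ {a, b}), |v s| := by
        gcongr; exact Finset.abs_sum_le_sum_abs _ _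
    _ < (|v a| + |v b|) + ∑ s ∈ (Finset.univ \ {a, b}), |v s| := by
        have := abs_add_lt_of_signs ha hb; linarith

/-- Uniqueness of the stationary distribution of a primitive stochastic matrix. -/
private lemma stat_unique {S : Type*} [Fintype S] [Nonempty S] [DecidableEq S] (P : S → S → ℝ)
    (hP_row : ∀ s, ∑ t : S, P s t = 1)
    (k : ℕ) (hPk_pos : ∀ s t, 0 < ((Matrix.of P) ^ k) s t)
    (ν μ : S → ℝ) (hν1 : ∑ s : S, ν s = 1)
    (hνP : ∀ t, ∑ s : S, ν s * P s t = ν t)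
    (hμ1 : ∑ s : S, μ s = 1)
    (hμP : ∀ t, ∑ s : S, μ s * P s t = μ t) : ∀ t, ν t = μ t := by
  classical
  set d : S → ℝ := fun s => ν s - μ s with hd
  have hd_sum : ∑ s : S, d s = 0 := by simp [hd, Finset.sum_sub_distrib, hν1, hμ1]
  have hd_stat : ∀ n t, ∑ s : S, d s * ((Matrix.of P) ^ n) s t = d t := by
    intro n
    induction n with
    | zero =>
      intro t
      simp only [pow_zero, Matrix.one_apply]
      rw [Finset.sum_eq_single t]
      · simp
      · intro b _ hb; simp [hb]
      · simp
    | succ n ih =>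
      intro t
      have : ∀ s, ((Matrix.of P) ^ (n+1)) s t
          = ∑ u : S, ((Matrix.of P) ^ n) s u * P u t := by
        intro s; rw [pow_succ, Matrix.mul_apply]; rfl
      simp only [this, Finset.mul_sum]
      rw [Finset.sum_comm]
      have : ∀ u, ∑ s : S, d s * (((Matrix.of P) ^ n) s u * P u t)
          = (∑ s : S, d s * ((Matrix.of P) ^ n) s u) * P u t := by
        intro u; rw [Finset.sum_mul]; congr 1; ext s; ring
      simp only [this, ih]
      have : ∑ s : S, d s * P s t = d t := by
        simp only [hd, sub_mul, Finset.sum_sub_distrib, hνP t, hμP t]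
      exact this
  have hrow_pow : ∀ n s, ∑ t : S, ((Matrix.of P) ^ n) s t = 1 := by
    intro n
    induction n with
    | zero => intro s; simp [Matrix.one_apply]
    | succ n ih =>
      intro s
      have : ∀ t, ((Matrix.of P) ^ (n+1)) s t
          = ∑ u : S, ((Matrix.of P) ^ n) s u * P u t := by
        intro t; rw [pow_succ, Matrix.mul_apply]; rfl
      simp only [this]
      rw [Finset.sum_comm]
      simp only [← Finset.mul_sum, hP_row, mul_one, ih]
  by_contra hcon
  push_neg at hcon
  obtain ⟨t0, ht0⟩ := hcon
  have hd0 : d t0 ≠ 0 := sub_ne_zero.mpr ht0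
  have hab : (∃ a, 0 < d a) ∧ (∃ b, d b < 0) := by
    constructor
    · by_contra hc; push_neg at hc
      have hsum : ∑ s ∈ Finset.univ, (fun s => -d s) s = 0 := by
        simp only [Finset.sum_neg_distrib, hd_sum, neg_zero]
      have := (Finset.sum_eq_zero_iff_of_nonneg
        (fun s (_ : s ∈ Finset.univ) => by simpa using hc s)).mp hsum
      have := this t0 (Finset.mem_univ _)
      exact hd0 (by simpa using this)
    · by_contra hc; push_neg at hc
      have : ∀ s ∈ Finset.univ, d s = 0 :=
        (Finset.sum_eq_zero_iff_of_nonneg (fun s _ => hc s)).mp hd_sum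
      exact hd0 (this t0 (Finset.mem_univ _))
  obtain ⟨⟨a, hda⟩, ⟨b, hdb⟩⟩ := hab
  have hstrict : ∀ t, |d t| < ∑ s : S, |d s| * ((Matrix.of P) ^ k) s t := by
    intro t
    rw [← hd_stat k t]
    have := abs_sum_lt (v := fun s => d s * ((Matrix.of P) ^ k) s t)
      (a := a) (b := b)
      (by exact mul_pos hda (hPk_pos a t))
      (by exact mul_neg_of_neg_of_pos hdb (hPk_pos b t))
    calc |∑ s : S, d s * ((Matrix.of P) ^ k) s t|
        < ∑ s : S, |d s * ((Matrix.of P) ^ k) s t| := this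
      _ = ∑ s : S, |d s| * ((Matrix.of P) ^ k) s t := by
          apply Finset.sum_congr rfl; intro s _
          rw [abs_mul, abs_of_pos (hPk_pos s t)]
  have : ∑ t : S, |d t| < ∑ t : S, |d t| := by
    calc ∑ t : S, |d t| < ∑ t : S, ∑ s : S, |d s| * ((Matrix.of P) ^ k) s t :=
          Finset.sum_lt_sum_of_nonempty Finset.univ_nonempty (fun t _ => hstrict t)
      _ = ∑ s : S, |d s| * ∑ t : S, ((Matrix.of P) ^ k) s t := by
          rw [Finset.sum_comm]; simp [Finset.mul_sum]
      _ = ∑ s : S, |d s| := by simp [hrow_pow k]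
  exact absurd this (lt_irrefl _)

private lemma pow_conj {S : Type*} [Fintype S] [DecidableEq S]
    (m : S → S → ℝ) (r : ℝ) (h : S → ℝ) (hh : ∀ s, h s ≠ 0) :
    ∀ (k : ℕ) (s t : S), ((Matrix.of (fun s t => m s t * h t / (r * h s))) ^ k) s t
      = ((Matrix.of m) ^ k) s t * h t / (r ^ k * h s) := by
  intro k
  induction k with
  | zero =>
    intro s t
    simp only [pow_zero, Matrix.one_apply]
    by_cases hst : s = t
    · subst hst; simp [hh s]
    · simp [hst]
  | succ k ih =>
    intro s t
    rw [pow_succ, pow_succ, Matrix.mul_apply, Matrix.mul_apply]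
    have : ∀ u, ((Matrix.of (fun s t => m s t * h t / (r * h s))) ^ k) s u *
        (Matrix.of (fun s t => m s t * h t / (r * h s))) u t
        = (((Matrix.of m) ^ k) s u * (Matrix.of m) u t) * h t / (r ^ (k+1) * h s) := by
      intro u
      rw [ih s u]
      show ((Matrix.of m) ^ k) s u * h u / (r ^ k * h s) * (m u t * h t / (r * h u)) = _
      rw [div_mul_div_comm]
      rw [show ((Matrix.of m) ^ k) s u * h u * (m u t * h t)
          = (((Matrix.of m) ^ k) s u * (Matrix.of m) u t * h t) * h u by
        show _ = (((Matrix.of m) ^ k) s u * m u t * h t) * h u; ring]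
      rw [show r ^ k * h s * (r * h u) = (r ^ (k+1) * h s) * h u by ring]
      exact mul_div_mul_right _ _ (hh u)
    simp only [this]
    rw [← Finset.sum_div, ← Finset.sum_mul]

theorem invariant_law_one_dim_marginals
    {S : Type*} [Fintype S] [Nonempty S] [DecidableEq S]
    [TopologicalSpace S] [DiscreteTopology S]
    [MeasurableSpace S] [BorelSpace S]
    (m : S → S → ℝ)
    (hm_nonneg : ∀ s t, 0 ≤ m s t)
    (hm_prim : ∃ k : ℕ, 1 ≤ k ∧ ∀ s t, 0 < ((Matrix.of m) ^ k) s t)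
    (τ : ℕ → ℝ)
    (hτ_nonneg : ∀ j, 0 ≤ τ j) (hτ_sum : HasSum τ 1)
    (hτ_zero : 0 < τ 0)
    (hτ_mean : Summable fun j : ℕ => (j : ℝ) * τ j)
    -- Perron–Frobenius data for `m`
    (r : ℝ) (hr_pos : 0 < r)
    (h : S → ℝ) (hh_pos : ∀ s, 0 < h s)
    (hh_eig : ∀ s, ∑ t : S, m s t * h t = r * h s)
    (ρ : S → ℝ) (hρ_nonneg : ∀ s, 0 ≤ ρ s) (hρ_sum : ∑ s : S, ρ s = 1)
    (hρ_eig : ∀ t, ∑ s : S, ρ s * m s t = r * ρ t)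
    (hρh : ∑ s : S, ρ s * h s = 1)
    -- the biased kernel `Q̄`
    (Q : Kernel (S × (ℕ → S)) (S × (ℕ → S))) [IsMarkovKernel Q]
    (hQ : ∀ (p : S × (ℕ → S)) (A : Set (S × (ℕ → S))), MeasurableSet A →
      (Q p A).toReal = ∑' j : ℕ, τ j * ∑ t : S,
        (m (p.2 j) t * h t / (r * h (p.2 j))) *
          A.indicator (fun _ => (1 : ℝ)) (p.2 j, memCons t p.2))
    -- an invariant probability measure
    (σ : Measure (S × (ℕ → S))) (hσ_prob : IsProbabilityMeasure σ)
    (hσ_inv : σ.bind (fun p => Q p) = σ) :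
    ∀ (t : S) (j : ℕ),
      (σ {p : S × (ℕ → S) | p.1 = t}).toReal = ρ t * h t ∧
      (σ {p : S × (ℕ → S) | p.2 j = t}).toReal = ρ t * h t := by
  classical
  haveI := hσ_prob
  haveI : MeasurableSingletonClass S := ⟨fun a => (isOpen_discrete {a}).measurableSet⟩
  have hr_ne : r ≠ 0 := ne_of_gt hr_pos
  have hh_ne : ∀ s, h s ≠ 0 := fun s => ne_of_gt (hh_pos s)
  -- the biased stochastic matrix
  set P : S → S → ℝ := fun s t => m s t * h t / (r * h s) with hP
  have hP_nonneg : ∀ s t, 0 ≤ P s t := fun s t =>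
    div_nonneg (mul_nonneg (hm_nonneg s t) (hh_pos t).le)
      (mul_nonneg hr_pos.le (hh_pos s).le)
  have hrow : ∀ s, ∑ t : S, P s t = 1 := by
    intro s
    rw [hP, ← Finset.sum_div, hh_eig s, div_self (mul_ne_zero hr_ne (hh_ne s))]
  have hP_le_one : ∀ s t, P s t ≤ 1 := by
    intro s t
    calc P s t ≤ ∑ u : S, P s u :=
      Finset.single_le_sum (fun u _ => hP_nonneg s u) (Finset.mem_univ t)
    _ = 1 := hrow s
  -- measurable sets
  have hmeas_snd : ∀ j : ℕ, Measurable fun p : S × (ℕ → S) => p.2 j :=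
    fun j => (measurable_pi_apply j).comp measurable_snd
  have hBset : ∀ (j : ℕ) (u : S), MeasurableSet {p : S × (ℕ → S) | p.2 j = u} :=
    fun j u => (hmeas_snd j) (measurableSet_singleton u)
  have hAset : ∀ u : S, MeasurableSet {p : S × (ℕ → S) | p.1 = u} :=
    fun u => measurable_fst (measurableSet_singleton u)
  -- master formula for the invariance
  have key : ∀ A : Set (S × (ℕ → S)), MeasurableSet A →
      (σ A).toReal = ∫ p, (∑' j : ℕ, τ j * ∑ t : S,
        P (p.2 j) t * A.indicator (fun _ => (1 : ℝ)) (p.2 j, memCons t p.2)) ∂σ := by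
    intro A hA
    conv_lhs => rw [← hσ_inv]
    rw [Measure.bind_apply hA (Kernel.measurable Q).aemeasurable]
    rw [← integral_toReal ((Kernel.measurable_coe Q hA).aemeasurable)
      (ae_of_all _ fun p => measure_lt_top _ _)]
    exact integral_congr_ae (ae_of_all _ fun p => hQ p A hA)
  -- the marginals of the second coordinate
  set ν : ℕ → S → ℝ := fun j u => (σ {p : S × (ℕ → S) | p.2 j = u}).toReal with hν
  have hind_int : ∀ (j : ℕ) (u : S),
      ∫ p, Set.indicator {q : S × (ℕ → S) | q.2 j = u} (fun _ => (1:ℝ)) p ∂σ = ν j u := by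
    intro j u
    rw [integral_indicator_const (1:ℝ) (hBset j u)]
    simp [hν, measureReal_def]
  -- Step 1 : ν (n+1) = ν n
  have step1 : ∀ n u, ν (n+1) u = ν n u := by
    intro n u
    have hpt : ∀ p : S × (ℕ → S),
        (∑' j : ℕ, τ j * ∑ t : S, P (p.2 j) t *
          Set.indicator {q : S × (ℕ → S) | q.2 (n+1) = u} (fun _ => (1:ℝ))
            (p.2 j, memCons t p.2))
        = Set.indicator {q : S × (ℕ → S) | q.2 n = u} (fun _ => (1:ℝ)) p := by
      intro p
      have hind : ∀ (j : ℕ) (t : S),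
          Set.indicator {q : S × (ℕ → S) | q.2 (n+1) = u} (fun _ => (1:ℝ))
            (p.2 j, memCons t p.2)
          = Set.indicator {q : S × (ℕ → S) | q.2 n = u} (fun _ => (1:ℝ)) p := by
        intro j t
        simp only [Set.indicator_apply, Set.mem_setOf_eq]
        rfl
      simp only [hind]
      rw [tsum_congr (fun j => by
        rw [← Finset.sum_mul, hrow, one_mul] :
          ∀ j : ℕ, τ j * ∑ t : S, P (p.2 j) t *
            Set.indicator {q : S × (ℕ → S) | q.2 n = u} (fun _ => (1:ℝ)) p
          = τ j * Set.indicator {q : S × (ℕ → S) | q.2 n = u} (fun _ => (1:ℝ)) p)]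
      rw [tsum_mul_right, hτ_sum.tsum_eq, one_mul]
    have := key _ (hBset (n+1) u)
    rw [integral_congr_ae (ae_of_all _ hpt), hind_int n u] at this
    exact this
  have hconst : ∀ j u, ν j u = ν 0 u := by
    intro j
    induction j with
    | zero => intro u; rfl
    | succ n ih => intro u; rw [step1 n u, ih u]
  -- helper facts for interchanging tsum and integral
  have hτ_tsum_ne_top : (∑' j : ℕ, ENNReal.ofReal (τ j)) ≠ ⊤ := by
    rw [← ENNReal.ofReal_tsum_of_nonneg hτ_nonneg hτ_sum.summable]
    exact ENNReal.ofReal_ne_top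
  have hnn_bound : ∀ (f : (S × (ℕ → S)) → ℝ) (c : ℝ), (∀ p, |f p| ≤ c) →
      (∫⁻ p, (‖f p‖₊ : ENNReal) ∂σ) ≤ ENNReal.ofReal c := by
    intro f c hf
    calc ∫⁻ p, (‖f p‖₊ : ENNReal) ∂σ ≤ ∫⁻ _, ENNReal.ofReal c ∂σ :=
        lintegral_mono (fun p =>
          (Real.enorm_eq_ofReal_abs (f p)).trans_le (ENNReal.ofReal_le_ofReal (hf p)))
      _ = ENNReal.ofReal c := by rw [lintegral_const, measure_univ, mul_one]
  -- Step 2 : the first marginal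
  have step2 : ∀ u, (σ {p : S × (ℕ → S) | p.1 = u}).toReal = ∑' j : ℕ, τ j * ν j u := by
    intro u
    have hpt : ∀ p : S × (ℕ → S),
        (∑' j : ℕ, τ j * ∑ t : S, P (p.2 j) t *
          Set.indicator {q : S × (ℕ → S) | q.1 = u} (fun _ => (1:ℝ))
            (p.2 j, memCons t p.2))
        = ∑' j : ℕ, τ j *
            Set.indicator {q : S × (ℕ → S) | q.2 j = u} (fun _ => (1:ℝ)) p := by
      intro p
      apply tsum_congr
      intro j
      have hind : ∀ t : S,
          Set.indicator {q : S × (ℕ → S) | q.1 = u} (fun _ => (1:ℝ))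
            (p.2 j, memCons t p.2)
          = Set.indicator {q : S × (ℕ → S) | q.2 j = u} (fun _ => (1:ℝ)) p := by
        intro t
        simp only [Set.indicator_apply, Set.mem_setOf_eq]
      simp only [hind]
      rw [← Finset.sum_mul, hrow, one_mul]
    have hmeasj2 : ∀ j : ℕ, AEStronglyMeasurable
        (fun p : S × (ℕ → S) => τ j *
          Set.indicator {q : S × (ℕ → S) | q.2 j = u} (fun _ => (1:ℝ)) p) σ :=
      fun j => ((measurable_const.indicator (hBset j u)).const_mul (τ j)).aestronglyMeasurable
    have hsum : (∑' j : ℕ, ∫⁻ p, (‖τ j *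
        Set.indicator {q : S × (ℕ → S) | q.2 j = u} (fun _ => (1:ℝ)) p‖₊ : ENNReal) ∂σ) ≠ ⊤ := by
      refine ne_top_of_le_ne_top hτ_tsum_ne_top (ENNReal.tsum_le_tsum fun j => ?_)
      apply hnn_bound
      intro p
      rw [abs_mul, abs_of_nonneg (hτ_nonneg j)]
      have : |Set.indicator {q : S × (ℕ → S) | q.2 j = u} (fun _ => (1:ℝ)) p| ≤ 1 := by
        simp only [Set.indicator_apply]
        split <;> simp
      nlinarith [hτ_nonneg j]
    have := key _ (hAset u)
    rw [integral_congr_ae (ae_of_all _ hpt), integral_tsum hmeasj2 hsum] at this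
    rw [this]
    apply tsum_congr
    intro j
    rw [integral_const_mul, hind_int j u]
  -- Step 3 : stationarity of ν 0
  have step3 : ∀ u, ν 0 u = ∑ s : S, ν 0 s * P s u := by
    intro u
    have hpt : ∀ p : S × (ℕ → S),
        (∑' j : ℕ, τ j * ∑ t : S, P (p.2 j) t *
          Set.indicator {q : S × (ℕ → S) | q.2 0 = u} (fun _ => (1:ℝ))
            (p.2 j, memCons t p.2))
        = ∑' j : ℕ, τ j * ∑ s : S, P s u *
            Set.indicator {q : S × (ℕ → S) | q.2 j = s} (fun _ => (1:ℝ)) p := by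
      intro p
      apply tsum_congr
      intro j
      congr 1
      have hind : ∀ t : S,
          Set.indicator {q : S × (ℕ → S) | q.2 0 = u} (fun _ => (1:ℝ))
            (p.2 j, memCons t p.2)
          = if t = u then (1:ℝ) else 0 := by
        intro t
        simp only [Set.indicator_apply, Set.mem_setOf_eq]
        rfl
      simp only [hind, mul_ite, mul_one, mul_zero]
      rw [Finset.sum_ite_eq' Finset.univ u (fun t => P (p.2 j) t)]
      simp only [Finset.mem_univ, if_true]
      have : ∀ s : S, P s u *
          Set.indicator {q : S × (ℕ → S) | q.2 j = s} (fun _ => (1:ℝ)) p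
          = if p.2 j = s then P s u else 0 := by
        intro s
        simp only [Set.indicator_apply, Set.mem_setOf_eq, mul_ite, mul_one, mul_zero]
      rw [Finset.sum_congr rfl (fun s _ => this s),
        Finset.sum_ite_eq Finset.univ (p.2 j) (fun s => P s u)]
      simp
    have hmeasj : ∀ j : ℕ, AEStronglyMeasurable
        (fun p : S × (ℕ → S) => τ j * ∑ s : S, P s u *
          Set.indicator {q : S × (ℕ → S) | q.2 j = s} (fun _ => (1:ℝ)) p) σ := by
      intro j
      refine Measurable.aestronglyMeasurable ?_
      apply Measurable.const_mul
      apply Finset.measurable_sum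
      intro s _
      exact (measurable_const.indicator (hBset j s)).const_mul (P s u)
    have hsum : (∑' j : ℕ, ∫⁻ p, (‖τ j * ∑ s : S, P s u *
        Set.indicator {q : S × (ℕ → S) | q.2 j = s} (fun _ => (1:ℝ)) p‖₊ : ENNReal) ∂σ) ≠ ⊤ := by
      refine ne_top_of_le_ne_top hτ_tsum_ne_top (ENNReal.tsum_le_tsum fun j => ?_)
      apply hnn_bound
      intro p
      rw [abs_mul, abs_of_nonneg (hτ_nonneg j)]
      have hval : |∑ s : S, P s u *
          Set.indicator {q : S × (ℕ → S) | q.2 j = s} (fun _ => (1:ℝ)) p| ≤ 1 := by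
        have heq : ∀ s : S, P s u *
            Set.indicator {q : S × (ℕ → S) | q.2 j = s} (fun _ => (1:ℝ)) p
            = if p.2 j = s then P s u else 0 := by
          intro s
          simp only [Set.indicator_apply, Set.mem_setOf_eq, mul_ite, mul_one, mul_zero]
        rw [Finset.sum_congr rfl (fun s _ => heq s),
          Finset.sum_ite_eq Finset.univ (p.2 j) (fun s => P s u)]
        simp only [Finset.mem_univ, if_true]
        rw [abs_of_nonneg (hP_nonneg _ u)]
        exact hP_le_one _ u
      nlinarith [hτ_nonneg j]
    have := key _ (hBset 0 u)
    rw [integral_congr_ae (ae_of_all _ hpt), integral_tsum hmeasj hsum] at this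
    show (σ {p : S × (ℕ → S) | p.2 0 = u}).toReal = ∑ s : S, ν 0 s * P s u
    rw [this]
    have hint : ∀ j : ℕ, (∫ p, τ j * ∑ s : S, P s u *
        Set.indicator {q : S × (ℕ → S) | q.2 j = s} (fun _ => (1:ℝ)) p ∂σ)
        = τ j * ∑ s : S, P s u * ν j s := by
      intro j
      rw [integral_const_mul]
      congr 1
      rw [integral_finset_sum Finset.univ (fun s _ =>
        (((integrable_const (1:ℝ)).indicator (hBset j s)).const_mul (P s u)))]
      apply Finset.sum_congr rfl
      intro s _
      rw [integral_const_mul, hind_int j s]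
    rw [tsum_congr hint]
    have : ∀ j : ℕ, τ j * ∑ s : S, P s u * ν j s = τ j * ∑ s : S, ν 0 s * P s u := by
      intro j
      congr 1
      apply Finset.sum_congr rfl
      intro s _
      rw [hconst j s, mul_comm]
    rw [tsum_congr this, tsum_mul_right, hτ_sum.tsum_eq, one_mul]
  -- ν 0 is a probability vector
  have hν_sum : ∑ u : S, ν 0 u = 1 := by
    have hpt : ∀ p : S × (ℕ → S),
        (∑ u : S, Set.indicator {q : S × (ℕ → S) | q.2 0 = u} (fun _ => (1:ℝ)) p) = 1 := by
      intro p
      have : ∀ u : S, Set.indicator {q : S × (ℕ → S) | q.2 0 = u} (fun _ => (1:ℝ)) p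
          = if p.2 0 = u then (1:ℝ) else 0 := by
        intro u; simp [Set.indicator_apply]
      rw [Finset.sum_congr rfl (fun u _ => this u),
        Finset.sum_ite_eq Finset.univ (p.2 0) (fun _ => (1:ℝ))]
      simp
    have h1 : ∫ p, (∑ u : S, Set.indicator
        {q : S × (ℕ → S) | q.2 0 = u} (fun _ => (1:ℝ)) p) ∂σ = 1 := by
      rw [integral_congr_ae (ae_of_all _ hpt)]
      simp
    rw [integral_finset_sum Finset.univ (fun u _ =>
      ((integrable_const (1:ℝ)).indicator (hBset 0 u))) ] at h1
    rw [← h1]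
    exact Finset.sum_congr rfl (fun u _ => (hind_int 0 u).symm)
  -- ρ·h is stationary for P
  have hρh_stat : ∀ u, ∑ s : S, (ρ s * h s) * P s u = ρ u * h u := by
    intro u
    have : ∀ s : S, (ρ s * h s) * P s u = (ρ s * m s u) * (h u / r) := by
      intro s
      rw [hP]
      field_simp [hh_ne s, hr_ne]
    rw [Finset.sum_congr rfl (fun s _ => this s), ← Finset.sum_mul, hρ_eig u]
    field_simp
  -- positivity of P^k
  obtain ⟨k, -, hk_pos⟩ := hm_prim
  have hPk_pos : ∀ s t, 0 < ((Matrix.of P) ^ k) s t := by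
    intro s t
    rw [hP]
    rw [pow_conj m r h hh_ne k s t]
    apply div_pos
    · exact mul_pos (hk_pos s t) (hh_pos t)
    · exact mul_pos (pow_pos hr_pos k) (hh_pos s)
  -- conclude via uniqueness of stationary distributions
  have hfinal : ∀ u, ν 0 u = ρ u * h u := by
    apply stat_unique P hrow k hPk_pos (ν 0) (fun u => ρ u * h u) hν_sum
      (fun u => (step3 u).symm) hρh (fun u => hρh_stat u)
  intro t j
  constructor
  · rw [step2 t]
    have : ∀ j : ℕ, τ j * ν j t = τ j * ν 0 t := fun j => by rw [hconst j t]
    rw [tsum_congr this, tsum_mul_right, hτ_sum.tsum_eq, one_mul, hfinal t]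
  · show ν j t = ρ t * h t
    rw [hconst j t, hfinal t]
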